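/- Let H be an inner product space and x_1,…,x_n ∈ H. Then (∑_{i=1}^n ‖x_i‖)² ≤ ‖∑_{i=1}^n x_i‖² + (n²(n²−1)/12) · max_{1 ≤ k ≤ n−1} ‖Δx_k‖², where Δx_k := x_{k+1} − x_k. -/

import Mathlib

open Finset

lemma sum1' (n : ℕ) : ∑ i ∈ Icc 1 n, (i : ℝ) = n * (n + 1) / 2 := by
  induction n with
  | zero => simp
  | succ n ih =>
    rw [Finset.sum_Icc_succ_top (Nat.succ_le_succ (Nat.zero_le n)), ih]
    push_cast; ring

lemma sum2' (n : ℕ) : ∑ i ∈ Icc 1 n, (i : ℝ) ^ 2 = n * (n + 1) * (2 * n + 1) / 6 := by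
  induction n with
  | zero => simp
  | succ n ih =>
    rw [Finset.sum_Icc_succ_top (Nat.succ_le_succ (Nat.zero_le n)), ih]
    push_cast; ring

lemma dsum (n : ℕ) :
    ∑ i ∈ Icc 1 n, ∑ j ∈ Icc 1 n, ((i : ℝ) - j) ^ 2 = (n : ℝ)^2 * ((n:ℝ)^2 - 1) / 6 := by
  have hcard : (Icc 1 n).card = n := by simp
  have h1 := sum1' n
  have h2 := sum2' n
  calc ∑ i ∈ Icc 1 n, ∑ j ∈ Icc 1 n, ((i : ℝ) - j) ^ 2
      = ∑ i ∈ Icc 1 n, (n * (i:ℝ)^2 - 2 * i * (n * (n + 1) / 2) + n * (n + 1) * (2 * n + 1) / 6) := by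
        refine Finset.sum_congr rfl fun i _ => ?_
        have : ∀ j ∈ Icc 1 n, ((i : ℝ) - j)^2 = (i:ℝ)^2 - 2 * i * j + (j:ℝ)^2 := by
          intro j _; ring
        rw [Finset.sum_congr rfl this]
        rw [Finset.sum_add_distrib, Finset.sum_sub_distrib, h2, Finset.sum_const, hcard]
        rw [← Finset.mul_sum, h1]
        push_cast; ring
    _ = (n : ℝ)^2 * ((n:ℝ)^2 - 1) / 6 := by
        rw [Finset.sum_add_distrib, Finset.sum_sub_distrib, Finset.sum_const, hcard]
        rw [← Finset.mul_sum, h2]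
        have : ∑ i ∈ Icc 1 n, 2 * (i:ℝ) * (n * (n + 1) / 2)
            = 2 * (n * (n+1)/2) * (n * (n + 1) / 2) := by
          rw [show (fun i : ℕ => 2 * (i:ℝ) * (n * (n + 1) / 2)) = fun i : ℕ => (2 * (n * (n + 1) / 2)) * (i:ℝ) from by funext i; ring]
          rw [← Finset.mul_sum, h1]
        rw [this]; push_cast; ring

theorem stmt_11 {𝕜 H : Type*} [RCLike 𝕜] [NormedAddCommGroup H] [InnerProductSpace 𝕜 H]
    (n : ℕ) (hn : 2 ≤ n) (x : ℕ → H)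
    (hne : (Finset.Icc 1 (n - 1)).Nonempty) :
    (∑ i ∈ Finset.Icc 1 n, ‖x i‖) ^ 2 ≤ ‖∑ i ∈ Finset.Icc 1 n, x i‖ ^ 2 +
      ((n : ℝ) ^ 2 * ((n : ℝ) ^ 2 - 1) / 12) *
        (Finset.Icc 1 (n - 1)).sup' hne (fun k => ‖x (k + 1) - x k‖ ^ 2) := by
  set M := (Finset.Icc 1 (n - 1)).sup' hne (fun k => ‖x (k + 1) - x k‖ ^ 2) with hMdef
  obtain ⟨k0, hk0⟩ := hne
  have hM0 : 0 ≤ M := le_trans (sq_nonneg ‖x (k0 + 1) - x k0‖) (Finset.le_sup' (fun k => ‖x (k + 1) - x k‖ ^ 2) hk0)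
  have hsq : Real.sqrt M ^ 2 = M := Real.sq_sqrt hM0
  -- step bound
  have hstep : ∀ k ∈ Finset.Icc 1 (n-1), ‖x (k+1) - x k‖ ≤ Real.sqrt M := by
    intro k hk
    rw [show Real.sqrt M = Real.sqrt M from rfl]
    have := Finset.le_sup' (fun k => ‖x (k + 1) - x k‖ ^ 2) hk
    nlinarith [Real.sqrt_nonneg M, norm_nonneg (x (k+1) - x k), Real.sq_sqrt hM0]
  -- chain bound
  have key : ∀ i j : ℕ, 1 ≤ i → i ≤ j → j ≤ n → ‖x j - x i‖ ≤ ((j : ℝ) - i) * Real.sqrt M := by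
    intro i j hi hij hj
    induction j, hij using Nat.le_induction with
    | base => simp
    | succ j hij ih =>
      have hjn : j ≤ n := le_trans (Nat.le_succ j) hj
      have hj1 : j ≤ n - 1 := Nat.le_sub_one_of_lt hj
      have hji : 1 ≤ j := le_trans hi hij
      have h1 : ‖x (j+1) - x i‖ ≤ ‖x (j+1) - x j‖ + ‖x j - x i‖ := norm_sub_le_norm_sub_add_norm_sub _ _ _
      have h2 := hstep j (Finset.mem_Icc.mpr ⟨hji, hj1⟩)
      have h3 := ih hjn
      push_cast
      calc ‖x (j+1) - x i‖ ≤ Real.sqrt M + ((j:ℝ) - i) * Real.sqrt M := by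
            push_cast at h3 ⊢; linarith
        _ = ((j:ℝ) + 1 - i) * Real.sqrt M := by ring
  have keysq : ∀ i ∈ Finset.Icc 1 n, ∀ j ∈ Finset.Icc 1 n,
      ‖x i - x j‖ ^ 2 ≤ ((i : ℝ) - j) ^ 2 * M := by
    intro i hi j hj
    simp only [Finset.mem_Icc] at hi hj
    rcases le_total i j with h | h
    · have := key i j hi.1 h hj.2
      rw [← norm_sub_rev]
      nlinarith [norm_nonneg (x j - x i), Real.sqrt_nonneg M]
    · have := key j i hj.1 h hi.2
      nlinarith [norm_nonneg (x i - x j), Real.sqrt_nonneg M]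
  -- expansions
  have h1 : (∑ i ∈ Finset.Icc 1 n, ‖x i‖) ^ 2
      = ∑ i ∈ Finset.Icc 1 n, ∑ j ∈ Finset.Icc 1 n, ‖x i‖ * ‖x j‖ := by
    rw [sq, Finset.sum_mul_sum]
  have h2 : ‖∑ i ∈ Finset.Icc 1 n, x i‖ ^ 2
      = ∑ i ∈ Finset.Icc 1 n, ∑ j ∈ Finset.Icc 1 n, RCLike.re (inner 𝕜 (x i) (x j)) := by
    rw [@norm_sq_eq_re_inner 𝕜, sum_inner, map_sum]
    refine Finset.sum_congr rfl fun i _ => ?_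
    rw [inner_sum, map_sum]
  have hterm : ∀ i ∈ Finset.Icc 1 n, ∀ j ∈ Finset.Icc 1 n,
      ‖x i‖ * ‖x j‖ - RCLike.re (inner 𝕜 (x i) (x j)) ≤ ((i : ℝ) - j)^2 * M / 2 := by
    intro i hi j hj
    have hns := @norm_sub_sq 𝕜 _ _ _ _ (x i) (x j)
    have := keysq i hi j hj
    nlinarith [sq_nonneg (‖x i‖ - ‖x j‖)]
  have hsum : ∑ i ∈ Finset.Icc 1 n, ∑ j ∈ Finset.Icc 1 n,
      (‖x i‖ * ‖x j‖ - RCLike.re (inner 𝕜 (x i) (x j)))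
      ≤ ∑ i ∈ Finset.Icc 1 n, ∑ j ∈ Finset.Icc 1 n, ((i : ℝ) - j)^2 * M / 2 := by
    refine Finset.sum_le_sum fun i hi => Finset.sum_le_sum fun j hj => hterm i hi j hj
  have hds : ∑ i ∈ Finset.Icc 1 n, ∑ j ∈ Finset.Icc 1 n, ((i : ℝ) - j)^2 * M / 2
      = (n : ℝ)^2 * ((n:ℝ)^2 - 1) / 12 * M := by
    have : ∀ i : ℕ, ∑ j ∈ Finset.Icc 1 n, ((i : ℝ) - j)^2 * M / 2
        = (∑ j ∈ Finset.Icc 1 n, ((i : ℝ) - j)^2) * (M/2) := by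
      intro i; rw [Finset.sum_mul]; refine Finset.sum_congr rfl fun j _ => by ring
    rw [Finset.sum_congr rfl fun i _ => this i, ← Finset.sum_mul, dsum]
    ring
  have hE : ∑ i ∈ Finset.Icc 1 n, ∑ j ∈ Finset.Icc 1 n,
      (‖x i‖ * ‖x j‖ - RCLike.re (inner 𝕜 (x i) (x j)))
      = (∑ i ∈ Finset.Icc 1 n, ∑ j ∈ Finset.Icc 1 n, ‖x i‖ * ‖x j‖)
        - ∑ i ∈ Finset.Icc 1 n, ∑ j ∈ Finset.Icc 1 n, RCLike.re (inner 𝕜 (x i) (x j)) := by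
    simp [Finset.sum_sub_distrib]
  rw [h1, h2]
  rw [hE, hds] at hsum
  linarith
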